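/- Let ĥ_i and h_j = ĥ_j + e_j be built from mutually independent complex Gaussian vectors, where ĥ_i has mean m_i with ‖m_i‖² = M·β_i·K_i/(K_i+1) and i.i.d. entries of variance v_i = β_i·η_i/(K_i+1), ĥ_j has mean m_j with ‖m_j‖² = M·β_j·K_j/(K_j+1) and i.i.d. entries of variance v_j = β_j·η_j/(K_j+1), and e_j has mean 0 and i.i.d. entries of variance σ_j² = β_j/((1+τ·p_p·β_j)(K_j+1)). Then exactly E{|ĥ_i^H h_j|²} = |m_i^H m_j|² + M·ξ_{ij}, where ξ_{ij} = (β_i·β_j/((K_i+1)(K_j+1)))·[ (K_i+η_i)/(1+τ·p_p·β_j) + K_j·η_i + K_i·η_j + η_i·η_j ]. This is the exact form of the approximation (44) and of the interference coefficients (25)–(26). -/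

import Mathlib

open MeasureTheory ProbabilityTheory

/-- `u^H w = ∑ₖ conj(uₖ) wₖ`. -/
noncomputable def dotH {M : ℕ} (u w : Fin M → ℂ) : ℂ :=
  ∑ k, (starRingEnd ℂ) (u k) * w k

/-- `‖u‖² = u^H u = ∑ₖ |uₖ|²`. -/
noncomputable def norm2 {M : ℕ} (u : Fin M → ℂ) : ℝ :=
  ∑ k, Complex.normSq (u k)

/-- A complex Gaussian random vector in `ℂ^M` with mean `m` and i.i.d. circularly
symmetric entries of variance `v`: `x = m + z` where the `2M` real random variables
`Re z₁, …, Re z_M, Im z₁, …, Im z_M` are mutually independent real Gaussian random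
variables each with mean `0` and variance `v/2`. -/
def IsComplexGaussianVec {Ω : Type*} [MeasurableSpace Ω] (μ : Measure Ω) (M : ℕ)
    (x : Ω → Fin M → ℂ) (m : Fin M → ℂ) (v : ℝ) : Prop :=
  (∀ k, Measurable fun ω => x ω k) ∧
  iIndepFun
    (Sum.elim (fun k ω => (x ω k - m k).re) (fun k ω => (x ω k - m k).im)) μ ∧
  (∀ k : Fin M, μ.map (fun ω => (x ω k - m k).re) = gaussianReal 0 (Real.toNNReal (v / 2))) ∧
  (∀ k : Fin M, μ.map (fun ω => (x ω k - m k).im) = gaussianReal 0 (Real.toNNReal (v / 2)))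

set_option linter.unusedSectionVars false
set_option maxHeartbeats 1000000

open Real Filter ComplexConjugate
open scoped NNReal ENNReal


lemma my_integrable_sq_mul_exp_neg_mul_sq {b : ℝ} (hb : 0 < b) :
    Integrable (fun x : ℝ => x ^ 2 * Real.exp (-b * x ^ 2)) := by
  have h := integrable_rpow_mul_exp_neg_mul_sq hb (s := 2) (by norm_num)
  have : ∀ x : ℝ, x ^ (2 : ℝ) = x ^ (2 : ℕ) := fun x => by
    rw [← Real.rpow_natCast x 2]; norm_num
  simpa [this] using h

lemma my_integral_mul_exp_neg_mul_sq {b : ℝ} (hb : 0 < b) :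
    ∫ x : ℝ, x * Real.exp (-b * x ^ 2) = 0 := by
  have hderiv : ∀ x : ℝ, HasDerivAt (fun y : ℝ => -(2 * b)⁻¹ * Real.exp (-b * y ^ 2))
      (x * Real.exp (-b * x ^ 2)) x := by
    intro x
    have h1 : HasDerivAt (fun y : ℝ => -b * y ^ 2) (-b * (2 * x)) x := by
      simpa using ((hasDerivAt_pow 2 x).const_mul (-b))
    have h2 := (h1.exp).const_mul (-(2 * b)⁻¹)
    refine h2.congr_deriv ?_
    field_simp
  exact integral_eq_zero_of_hasDerivAt_of_integrable hderiv
    (integrable_mul_exp_neg_mul_sq hb)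
    (((integrable_exp_neg_mul_sq hb).const_mul _))

lemma my_integral_sq_mul_exp_neg_mul_sq {b : ℝ} (hb : 0 < b) :
    ∫ x : ℝ, x ^ 2 * Real.exp (-b * x ^ 2) = (2 * b)⁻¹ * Real.sqrt (π / b) := by
  have hderiv : ∀ x : ℝ, HasDerivAt (fun y : ℝ => -(2 * b)⁻¹ * (y * Real.exp (-b * y ^ 2)))
      (x ^ 2 * Real.exp (-b * x ^ 2) - (2 * b)⁻¹ * Real.exp (-b * x ^ 2)) x := by
    intro x
    have h1 : HasDerivAt (fun y : ℝ => -b * y ^ 2) (-b * (2 * x)) x := by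
      simpa using ((hasDerivAt_pow 2 x).const_mul (-b))
    have h2 : HasDerivAt (fun y : ℝ => y * Real.exp (-b * y ^ 2))
        (1 * Real.exp (-b * x ^ 2) + x * (Real.exp (-b * x ^ 2) * (-b * (2 * x)))) x :=
      (hasDerivAt_id x).mul h1.exp
    have h3 := h2.const_mul (-(2 * b)⁻¹)
    refine h3.congr_deriv ?_
    field_simp
    ring
  have hint : Integrable (fun x : ℝ =>
      x ^ 2 * Real.exp (-b * x ^ 2) - (2 * b)⁻¹ * Real.exp (-b * x ^ 2)) :=
    (my_integrable_sq_mul_exp_neg_mul_sq hb).sub ((integrable_exp_neg_mul_sq hb).const_mul _)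
  have h0 := integral_eq_zero_of_hasDerivAt_of_integrable hderiv hint
    ((integrable_mul_exp_neg_mul_sq hb).const_mul _)
  rw [integral_sub (my_integrable_sq_mul_exp_neg_mul_sq hb)
    ((integrable_exp_neg_mul_sq hb).const_mul _), sub_eq_zero] at h0
  rw [h0, integral_const_mul, integral_gaussian]

section
variable {v : ℝ≥0}

lemma gauss_density (hv : v ≠ 0) :
    gaussianReal 0 v
      = volume.withDensity (fun x => ((gaussianPDFReal 0 v x).toNNReal : ℝ≥0∞)) := by
  rw [gaussianReal_of_var_ne_zero _ hv]
  rfl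

lemma gauss_integrable_iff (hv : v ≠ 0) (g : ℝ → ℝ) :
    Integrable g (gaussianReal 0 v) ↔
      Integrable (fun x => gaussianPDFReal 0 v x * g x) volume := by
  rw [gauss_density hv,
    integrable_withDensity_iff_integrable_smul (measurable_gaussianPDFReal 0 v).real_toNNReal]
  refine integrable_congr (Filter.Eventually.of_forall fun x => ?_)
  simp [NNReal.smul_def, Real.coe_toNNReal _ (gaussianPDFReal_nonneg 0 v x)]

lemma gauss_integral_eq (hv : v ≠ 0) (g : ℝ → ℝ) :
    ∫ x, g x ∂(gaussianReal 0 v) = ∫ x, gaussianPDFReal 0 v x * g x := by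
  rw [gauss_density hv,
    integral_withDensity_eq_integral_smul (measurable_gaussianPDFReal 0 v).real_toNNReal]
  refine integral_congr_ae (Filter.Eventually.of_forall fun x => ?_)
  simp [NNReal.smul_def, Real.coe_toNNReal _ (gaussianPDFReal_nonneg 0 v x)]
end

section
variable {v : ℝ≥0}

lemma gauss_pdf_eq (hv : v ≠ 0) (x : ℝ) :
    gaussianPDFReal 0 v x = (√(2 * π * v))⁻¹ * Real.exp (-(2 * (v:ℝ))⁻¹ * x ^ 2) := by
  have hv' : (0:ℝ) < v := by positivity
  rw [gaussianPDFReal]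
  congr 1
  rw [sub_zero]
  congr 1
  field_simp

lemma gauss_integrable_id (hv : v ≠ 0) : Integrable (fun x : ℝ => x) (gaussianReal 0 v) := by
  have hv' : (0:ℝ) < v := by positivity
  have hb : (0:ℝ) < (2 * (v:ℝ))⁻¹ := by positivity
  rw [gauss_integrable_iff hv]
  refine (Integrable.congr (((integrable_mul_exp_neg_mul_sq hb).const_mul (√(2 * π * v))⁻¹))
    (Filter.Eventually.of_forall fun x => ?_))
  simp only [gauss_pdf_eq hv]
  ring

lemma gauss_integral_id (hv : v ≠ 0) : ∫ x, x ∂(gaussianReal 0 v) = 0 := by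
  have hv' : (0:ℝ) < v := by positivity
  have hb : (0:ℝ) < (2 * (v:ℝ))⁻¹ := by positivity
  rw [gauss_integral_eq hv]
  have : ∀ x : ℝ, gaussianPDFReal 0 v x * x
      = (√(2 * π * v))⁻¹ * (x * Real.exp (-(2 * (v:ℝ))⁻¹ * x ^ 2)) := fun x => by
    simp only [gauss_pdf_eq hv]; ring
  simp_rw [this, integral_const_mul, my_integral_mul_exp_neg_mul_sq hb, mul_zero]

lemma gauss_integrable_sq (hv : v ≠ 0) :
    Integrable (fun x : ℝ => x ^ 2) (gaussianReal 0 v) := by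
  have hv' : (0:ℝ) < v := by positivity
  have hb : (0:ℝ) < (2 * (v:ℝ))⁻¹ := by positivity
  rw [gauss_integrable_iff hv]
  refine (Integrable.congr (((my_integrable_sq_mul_exp_neg_mul_sq hb).const_mul (√(2 * π * v))⁻¹))
    (Filter.Eventually.of_forall fun x => ?_))
  simp only [gauss_pdf_eq hv]
  ring

lemma gauss_integral_sq (hv : v ≠ 0) : ∫ x, x ^ 2 ∂(gaussianReal 0 v) = v := by
  have hv' : (0:ℝ) < v := by positivity
  have hb : (0:ℝ) < (2 * (v:ℝ))⁻¹ := by positivity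
  rw [gauss_integral_eq hv]
  have : ∀ x : ℝ, gaussianPDFReal 0 v x * x ^ 2
      = (√(2 * π * v))⁻¹ * (x ^ 2 * Real.exp (-(2 * (v:ℝ))⁻¹ * x ^ 2)) := fun x => by
    simp only [gauss_pdf_eq hv]; ring
  simp_rw [this, integral_const_mul, my_integral_sq_mul_exp_neg_mul_sq hb]
  have h1 : ((2:ℝ) * (2 * (v:ℝ))⁻¹)⁻¹ = (v:ℝ) := by field_simp
  have h2 : π / (2 * (v:ℝ))⁻¹ = 2 * π * v := by field_simp
  rw [h1, h2]
  have h3 : (0:ℝ) < √(2 * π * v) := Real.sqrt_pos.mpr (by positivity)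
  field_simp



section MapMoments
variable {Ω : Type*} [MeasurableSpace Ω] {μ : Measure Ω} {W : Ω → ℝ} {V : ℝ≥0}

lemma map_integrable (hW : Measurable W) (hV : V ≠ 0) (hmap : μ.map W = gaussianReal 0 V) :
    Integrable W μ := by
  have h := gauss_integrable_id hV
  rw [← hmap] at h
  simpa using (integrable_map_measure aestronglyMeasurable_id hW.aemeasurable).mp h

lemma map_integral_zero (hW : Measurable W) (hV : V ≠ 0) (hmap : μ.map W = gaussianReal 0 V) :
    ∫ ω, W ω ∂μ = 0 := by
  have h : ∫ ω, W ω ∂μ = ∫ x, x ∂(μ.map W) :=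
    (integral_map hW.aemeasurable aestronglyMeasurable_id).symm
  rw [h, hmap, gauss_integral_id hV]

lemma map_integrable_sq (hW : Measurable W) (hV : V ≠ 0) (hmap : μ.map W = gaussianReal 0 V) :
    Integrable (fun ω => W ω ^ 2) μ := by
  have h := gauss_integrable_sq hV
  rw [← hmap] at h
  simpa [Function.comp_def] using (integrable_map_measure
    (measurable_id.pow_const 2).aestronglyMeasurable hW.aemeasurable).mp h

lemma map_integral_sq (hW : Measurable W) (hV : V ≠ 0) (hmap : μ.map W = gaussianReal 0 V) :
    ∫ ω, W ω ^ 2 ∂μ = V := by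
  have h : ∫ ω, W ω ^ 2 ∂μ = ∫ x, x ^ 2 ∂(μ.map W) :=
    (integral_map hW.aemeasurable (measurable_id.pow_const 2).aestronglyMeasurable).symm
  rw [h, hmap, gauss_integral_sq hV]

end MapMoments

section IndepC
variable {Ω : Type*} [MeasurableSpace Ω] {μ : Measure Ω}

lemma indep_integral_mul_complex {X Y : Ω → ℂ} (h : IndepFun X Y μ)
    (hX : Integrable X μ) (hY : Integrable Y μ) :
    ∫ ω, X ω * Y ω ∂μ = (∫ ω, X ω ∂μ) * ∫ ω, Y ω ∂μ := by
  have hXr : Integrable (fun ω => (X ω).re) μ := by simpa using hX.re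
  have hXi : Integrable (fun ω => (X ω).im) μ := by simpa using hX.im
  have hYr : Integrable (fun ω => (Y ω).re) μ := by simpa using hY.re
  have hYi : Integrable (fun ω => (Y ω).im) μ := by simpa using hY.im
  have irr : Integrable (fun ω => (X ω).re * (Y ω).re) μ := by
    simpa [Function.comp_def, Pi.mul_def] using
      (h.comp Complex.measurable_re Complex.measurable_re).integrable_mul hXr hYr
  have iri : Integrable (fun ω => (X ω).re * (Y ω).im) μ := by
    simpa [Function.comp_def, Pi.mul_def] using
      (h.comp Complex.measurable_re Complex.measurable_im).integrable_mul hXr hYi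
  have iir : Integrable (fun ω => (X ω).im * (Y ω).re) μ := by
    simpa [Function.comp_def, Pi.mul_def] using
      (h.comp Complex.measurable_im Complex.measurable_re).integrable_mul hXi hYr
  have iii : Integrable (fun ω => (X ω).im * (Y ω).im) μ := by
    simpa [Function.comp_def, Pi.mul_def] using
      (h.comp Complex.measurable_im Complex.measurable_im).integrable_mul hXi hYi
  have hrr : ∫ ω, (X ω).re * (Y ω).re ∂μ = (∫ ω, (X ω).re ∂μ) * ∫ ω, (Y ω).re ∂μ := by
    simpa [Function.comp_def, Pi.mul_def] using
      (h.comp Complex.measurable_re Complex.measurable_re).integral_fun_mul_eq_mul_integral hXr.aestronglyMeasurable hYr.aestronglyMeasurable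
  have hri : ∫ ω, (X ω).re * (Y ω).im ∂μ = (∫ ω, (X ω).re ∂μ) * ∫ ω, (Y ω).im ∂μ := by
    simpa [Function.comp_def, Pi.mul_def] using
      (h.comp Complex.measurable_re Complex.measurable_im).integral_fun_mul_eq_mul_integral hXr.aestronglyMeasurable hYi.aestronglyMeasurable
  have hir : ∫ ω, (X ω).im * (Y ω).re ∂μ = (∫ ω, (X ω).im ∂μ) * ∫ ω, (Y ω).re ∂μ := by
    simpa [Function.comp_def, Pi.mul_def] using
      (h.comp Complex.measurable_im Complex.measurable_re).integral_fun_mul_eq_mul_integral hXi.aestronglyMeasurable hYr.aestronglyMeasurable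
  have hii : ∫ ω, (X ω).im * (Y ω).im ∂μ = (∫ ω, (X ω).im ∂μ) * ∫ ω, (Y ω).im ∂μ := by
    simpa [Function.comp_def, Pi.mul_def] using
      (h.comp Complex.measurable_im Complex.measurable_im).integral_fun_mul_eq_mul_integral hXi.aestronglyMeasurable hYi.aestronglyMeasurable
  have hmul : Integrable (fun ω => X ω * Y ω) μ := by
    simpa [Function.comp_def, Pi.mul_def] using h.integrable_mul hX hY
  have hXre : (∫ ω, X ω ∂μ).re = ∫ ω, (X ω).re ∂μ := by simpa using (integral_re hX).symm
  have hXim : (∫ ω, X ω ∂μ).im = ∫ ω, (X ω).im ∂μ := by simpa using (integral_im hX).symm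
  have hYre : (∫ ω, Y ω ∂μ).re = ∫ ω, (Y ω).re ∂μ := by simpa using (integral_re hY).symm
  have hYim : (∫ ω, Y ω ∂μ).im = ∫ ω, (Y ω).im ∂μ := by simpa using (integral_im hY).symm
  apply Complex.ext
  · have h1 : (∫ ω, X ω * Y ω ∂μ).re = ∫ ω, (X ω * Y ω).re ∂μ := by
      simpa using (integral_re hmul).symm
    rw [h1]
    simp only [Complex.mul_re]
    rw [integral_sub irr iii, hrr, hii, hXre, hXim, hYre, hYim]
  · have h1 : (∫ ω, X ω * Y ω ∂μ).im = ∫ ω, (X ω * Y ω).im ∂μ := by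
      simpa using (integral_im hmul).symm
    rw [h1]
    simp only [Complex.mul_im]
    rw [integral_add iri iir, hri, hir, hXre, hXim, hYre, hYim]

end IndepC




section Vec
variable {Ω : Type*} [MeasurableSpace Ω] {μ : Measure Ω} [IsProbabilityMeasure μ]
  {M : ℕ} {x : Ω → Fin M → ℂ} {m : Fin M → ℂ} {v : ℝ}

namespace CGV

variable (hx : IsComplexGaussianVec μ M x m v) (hv : 0 < v)

/-- real part of the centered variable -/
noncomputable def Zr (k : Fin M) (ω : Ω) : ℝ := (x ω k - m k).re
noncomputable def Zi (k : Fin M) (ω : Ω) : ℝ := (x ω k - m k).im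

lemma hVne (hv : 0 < v) : Real.toNNReal (v / 2) ≠ 0 := by
  simp only [ne_eq, Real.toNNReal_eq_zero, not_le]
  linarith

include hx in
lemma measZr (k : Fin M) : Measurable (Zr (x := x) (m := m) k) :=
  Complex.measurable_re.comp ((hx.1 k).sub measurable_const)

include hx in
lemma measZi (k : Fin M) : Measurable (Zi (x := x) (m := m) k) :=
  Complex.measurable_im.comp ((hx.1 k).sub measurable_const)

include hx hv in
lemma intZr (k : Fin M) : Integrable (Zr (x := x) (m := m) k) μ :=
  map_integrable (measZr hx k) (hVne hv) (hx.2.2.1 k)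

include hx hv in
lemma intZi (k : Fin M) : Integrable (Zi (x := x) (m := m) k) μ :=
  map_integrable (measZi hx k) (hVne hv) (hx.2.2.2 k)

include hx hv in
lemma EZr (k : Fin M) : ∫ ω, Zr (x := x) (m := m) k ω ∂μ = 0 :=
  map_integral_zero (measZr hx k) (hVne hv) (hx.2.2.1 k)

include hx hv in
lemma EZi (k : Fin M) : ∫ ω, Zi (x := x) (m := m) k ω ∂μ = 0 :=
  map_integral_zero (measZi hx k) (hVne hv) (hx.2.2.2 k)

include hx hv in
lemma intZr2 (k : Fin M) : Integrable (fun ω => Zr (x := x) (m := m) k ω ^ 2) μ :=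
  map_integrable_sq (measZr hx k) (hVne hv) (hx.2.2.1 k)

include hx hv in
lemma intZi2 (k : Fin M) : Integrable (fun ω => Zi (x := x) (m := m) k ω ^ 2) μ :=
  map_integrable_sq (measZi hx k) (hVne hv) (hx.2.2.2 k)

include hx hv in
lemma EZr2 (k : Fin M) : ∫ ω, Zr (x := x) (m := m) k ω ^ 2 ∂μ = v / 2 := by
  rw [map_integral_sq (measZr hx k) (hVne hv) (hx.2.2.1 k)]
  exact Real.coe_toNNReal _ (by linarith)

include hx hv in
lemma EZi2 (k : Fin M) : ∫ ω, Zi (x := x) (m := m) k ω ^ 2 ∂μ = v / 2 := by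
  rw [map_integral_sq (measZi hx k) (hVne hv) (hx.2.2.2 k)]
  exact Real.coe_toNNReal _ (by linarith)

/-- the joint family -/
noncomputable def W : Fin M ⊕ Fin M → Ω → ℝ :=
  Sum.elim (fun k ω => (x ω k - m k).re) (fun k ω => (x ω k - m k).im)

include hx in
lemma indepW {s t : Fin M ⊕ Fin M} (hst : s ≠ t) :
    IndepFun (W (x := x) (m := m) s) (W (x := x) (m := m) t) μ :=
  hx.2.1.indepFun hst

include hx hv in
lemma intW (s : Fin M ⊕ Fin M) : Integrable (W (x := x) (m := m) s) μ := by
  cases s with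
  | inl k => exact intZr hx hv k
  | inr k => exact intZi hx hv k

include hx hv in
lemma EW (s : Fin M ⊕ Fin M) : ∫ ω, W (x := x) (m := m) s ω ∂μ = 0 := by
  cases s with
  | inl k => exact EZr hx hv k
  | inr k => exact EZi hx hv k

include hx hv in
lemma intWprod {s t : Fin M ⊕ Fin M} (hst : s ≠ t) :
    Integrable (fun ω => W (x := x) (m := m) s ω * W (x := x) (m := m) t ω) μ := by
  simpa [Function.comp_def, Pi.mul_def] using
    (indepW hx hst).integrable_mul (intW hx hv s) (intW hx hv t)

include hx hv in
lemma EWprod {s t : Fin M ⊕ Fin M} (hst : s ≠ t) :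
    ∫ ω, W (x := x) (m := m) s ω * W (x := x) (m := m) t ω ∂μ = 0 := by
  have h := (indepW hx hst).integral_fun_mul_eq_mul_integral (intW hx hv s).aestronglyMeasurable (intW hx hv t).aestronglyMeasurable
  have h2 : ∫ ω, W (x := x) (m := m) s ω * W (x := x) (m := m) t ω ∂μ
      = (∫ ω, W (x := x) (m := m) s ω ∂μ) * ∫ ω, W (x := x) (m := m) t ω ∂μ := by
    simpa [Function.comp_def] using h
  rw [h2, EW hx hv s, EW hx hv t, mul_zero]

end CGV
end Vec

section Vec2
open ComplexConjugate
variable {Ω : Type*} [MeasurableSpace Ω] {μ : Measure Ω} [IsProbabilityMeasure μ]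
  {M : ℕ} {x : Ω → Fin M → ℂ} {m : Fin M → ℂ} {v : ℝ}

namespace CGV

variable (hx : IsComplexGaussianVec μ M x m v) (hv : 0 < v)

include hx hv in
lemma intP (k l : Fin M) :
    Integrable (fun ω => Zr (x := x) (m := m) k ω * Zr (x := x) (m := m) l ω
      + Zi (x := x) (m := m) k ω * Zi (x := x) (m := m) l ω) μ := by
  by_cases hkl : k = l
  · subst hkl
    exact ((intZr2 hx hv k).add (intZi2 hx hv k)).congr
      (Filter.Eventually.of_forall fun ω => by simp only [Pi.add_apply]; ring)
  · exact (intWprod hx hv (s := Sum.inl k) (t := Sum.inl l) (by simp [hkl])).add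
      (intWprod hx hv (s := Sum.inr k) (t := Sum.inr l) (by simp [hkl]))

include hx hv in
lemma EP (k l : Fin M) :
    ∫ ω, (Zr (x := x) (m := m) k ω * Zr (x := x) (m := m) l ω
      + Zi (x := x) (m := m) k ω * Zi (x := x) (m := m) l ω) ∂μ
      = if k = l then v else 0 := by
  by_cases hkl : k = l
  · subst hkl
    simp only [if_pos rfl]
    have h1 : ∀ ω : Ω, Zr (x := x) (m := m) k ω * Zr (x := x) (m := m) k ω
        + Zi (x := x) (m := m) k ω * Zi (x := x) (m := m) k ω
        = Zr (x := x) (m := m) k ω ^ 2 + Zi (x := x) (m := m) k ω ^ 2 := fun ω => by ring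
    rw [integral_congr_ae (Filter.Eventually.of_forall h1),
      integral_add (intZr2 hx hv k) (intZi2 hx hv k), EZr2 hx hv k, EZi2 hx hv k]
    simp
  · have i1 : Integrable (fun ω => Zr (x := x) (m := m) k ω * Zr (x := x) (m := m) l ω) μ :=
      intWprod hx hv (s := Sum.inl k) (t := Sum.inl l) (by simp [hkl])
    have i2 : Integrable (fun ω => Zi (x := x) (m := m) k ω * Zi (x := x) (m := m) l ω) μ :=
      intWprod hx hv (s := Sum.inr k) (t := Sum.inr l) (by simp [hkl])
    have e1 : ∫ ω, Zr (x := x) (m := m) k ω * Zr (x := x) (m := m) l ω ∂μ = 0 :=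
      EWprod hx hv (s := Sum.inl k) (t := Sum.inl l) (by simp [hkl])
    have e2 : ∫ ω, Zi (x := x) (m := m) k ω * Zi (x := x) (m := m) l ω ∂μ = 0 :=
      EWprod hx hv (s := Sum.inr k) (t := Sum.inr l) (by simp [hkl])
    rw [if_neg hkl, integral_add i1 i2, e1, e2, add_zero]

include hx hv in
lemma intQ (k l : Fin M) :
    Integrable (fun ω => Zr (x := x) (m := m) k ω * Zi (x := x) (m := m) l ω
      - Zi (x := x) (m := m) k ω * Zr (x := x) (m := m) l ω) μ :=
  (intWprod hx hv (s := Sum.inl k) (t := Sum.inr l) (by simp)).sub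
    (intWprod hx hv (s := Sum.inr k) (t := Sum.inl l) (by simp))

include hx hv in
lemma EQ (k l : Fin M) :
    ∫ ω, (Zr (x := x) (m := m) k ω * Zi (x := x) (m := m) l ω
      - Zi (x := x) (m := m) k ω * Zr (x := x) (m := m) l ω) ∂μ = 0 := by
  have i1 : Integrable (fun ω => Zr (x := x) (m := m) k ω * Zi (x := x) (m := m) l ω) μ :=
    intWprod hx hv (s := Sum.inl k) (t := Sum.inr l) (by simp)
  have i2 : Integrable (fun ω => Zi (x := x) (m := m) k ω * Zr (x := x) (m := m) l ω) μ :=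
    intWprod hx hv (s := Sum.inr k) (t := Sum.inl l) (by simp)
  have e1 : ∫ ω, Zr (x := x) (m := m) k ω * Zi (x := x) (m := m) l ω ∂μ = 0 :=
    EWprod hx hv (s := Sum.inl k) (t := Sum.inr l) (by simp)
  have e2 : ∫ ω, Zi (x := x) (m := m) k ω * Zr (x := x) (m := m) l ω ∂μ = 0 :=
    EWprod hx hv (s := Sum.inr k) (t := Sum.inl l) (by simp)
  rw [integral_sub i1 i2, e1, e2, sub_zero]

include hx hv in
lemma coordExpand (k : Fin M) : (fun ω => x ω k)
    = fun ω => m k + (((Zr (x := x) (m := m) k ω : ℝ) : ℂ)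
        + ((Zi (x := x) (m := m) k ω : ℝ) : ℂ) * Complex.I) := by
  funext ω
  apply Complex.ext <;> simp [Zr, Zi] <;> ring

include hx hv in
lemma intCoord (k : Fin M) : Integrable (fun ω => x ω k) μ := by
  rw [coordExpand hx hv k]
  exact (integrable_const _).add
    (((intZr hx hv k).ofReal).add (((intZi hx hv k).ofReal).mul_const _))

include hx hv in
lemma ECoord (k : Fin M) : ∫ ω, x ω k ∂μ = m k := by
  have i1 : Integrable (fun ω : Ω => ((Zr (x := x) (m := m) k ω : ℝ) : ℂ)) μ :=
    (intZr hx hv k).ofReal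
  have i2 : Integrable (fun ω : Ω => ((Zi (x := x) (m := m) k ω : ℝ) : ℂ) * Complex.I) μ :=
    ((intZi hx hv k).ofReal).mul_const _
  have i12 : Integrable (fun ω : Ω => ((Zr (x := x) (m := m) k ω : ℝ) : ℂ)
      + ((Zi (x := x) (m := m) k ω : ℝ) : ℂ) * Complex.I) μ := i1.add i2
  have eZr : ∫ ω, ((Zr (x := x) (m := m) k ω : ℝ) : ℂ) ∂μ = 0 := by
    have h : ∫ ω, ((Zr (x := x) (m := m) k ω : ℝ) : ℂ) ∂μ
        = ((∫ ω, Zr (x := x) (m := m) k ω ∂μ : ℝ) : ℂ) := integral_ofReal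
    rw [h, EZr hx hv k]; simp
  have eZi : ∫ ω, ((Zi (x := x) (m := m) k ω : ℝ) : ℂ) ∂μ = 0 := by
    have h : ∫ ω, ((Zi (x := x) (m := m) k ω : ℝ) : ℂ) ∂μ
        = ((∫ ω, Zi (x := x) (m := m) k ω ∂μ : ℝ) : ℂ) := integral_ofReal
    rw [h, EZi hx hv k]; simp
  rw [coordExpand hx hv k, integral_add (integrable_const _) i12, integral_add i1 i2,
    integral_mul_const, eZr, eZi, integral_const]
  simp

include hx hv in
lemma mulExpand (k l : Fin M) : (fun ω => conj (x ω k) * x ω l)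
    = fun ω => conj (m k) * m l
      + conj (m k) * (((Zr (x := x) (m := m) l ω : ℝ) : ℂ)
          + ((Zi (x := x) (m := m) l ω : ℝ) : ℂ) * Complex.I)
      + (((Zr (x := x) (m := m) k ω : ℝ) : ℂ)
          - ((Zi (x := x) (m := m) k ω : ℝ) : ℂ) * Complex.I) * m l
      + ((((Zr (x := x) (m := m) k ω * Zr (x := x) (m := m) l ω
            + Zi (x := x) (m := m) k ω * Zi (x := x) (m := m) l ω : ℝ)) : ℂ)
          + (((Zr (x := x) (m := m) k ω * Zi (x := x) (m := m) l ω
            - Zi (x := x) (m := m) k ω * Zr (x := x) (m := m) l ω : ℝ)) : ℂ) * Complex.I) := by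
  funext ω
  apply Complex.ext <;>
    simp [Zr, Zi, Complex.mul_re, Complex.mul_im, Complex.add_re, Complex.add_im] <;> ring

include hx hv in
lemma intMul (k l : Fin M) : Integrable (fun ω => conj (x ω k) * x ω l) μ := by
  rw [mulExpand hx hv k l]
  exact (((integrable_const _).add
      ((((intZr hx hv l).ofReal).add (((intZi hx hv l).ofReal).mul_const _)).const_mul _)).add
      ((((intZr hx hv k).ofReal).sub (((intZi hx hv k).ofReal).mul_const _)).mul_const _)).add
      (((intP hx hv k l).ofReal).add (((intQ hx hv k l).ofReal).mul_const _))

include hx hv in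
lemma EMul (k l : Fin M) : ∫ ω, conj (x ω k) * x ω l ∂μ
    = conj (m k) * m l + (if k = l then (v : ℂ) else 0) := by
  have i1l : Integrable (fun ω : Ω => ((Zr (x := x) (m := m) l ω : ℝ) : ℂ)) μ :=
    (intZr hx hv l).ofReal
  have i2l : Integrable (fun ω : Ω => ((Zi (x := x) (m := m) l ω : ℝ) : ℂ) * Complex.I) μ :=
    ((intZi hx hv l).ofReal).mul_const _
  have i1k : Integrable (fun ω : Ω => ((Zr (x := x) (m := m) k ω : ℝ) : ℂ)) μ :=
    (intZr hx hv k).ofReal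
  have i2k : Integrable (fun ω : Ω => ((Zi (x := x) (m := m) k ω : ℝ) : ℂ) * Complex.I) μ :=
    ((intZi hx hv k).ofReal).mul_const _
  have iZl : Integrable (fun ω : Ω => ((Zr (x := x) (m := m) l ω : ℝ) : ℂ)
      + ((Zi (x := x) (m := m) l ω : ℝ) : ℂ) * Complex.I) μ := i1l.add i2l
  have iA2 : Integrable (fun ω : Ω => conj (m k) * (((Zr (x := x) (m := m) l ω : ℝ) : ℂ)
      + ((Zi (x := x) (m := m) l ω : ℝ) : ℂ) * Complex.I)) μ := iZl.const_mul _
  have iZkc : Integrable (fun ω : Ω => ((Zr (x := x) (m := m) k ω : ℝ) : ℂ)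
      - ((Zi (x := x) (m := m) k ω : ℝ) : ℂ) * Complex.I) μ := i1k.sub i2k
  have iA3 : Integrable (fun ω : Ω => (((Zr (x := x) (m := m) k ω : ℝ) : ℂ)
      - ((Zi (x := x) (m := m) k ω : ℝ) : ℂ) * Complex.I) * m l) μ := iZkc.mul_const _
  have iP : Integrable (fun ω : Ω => (((Zr (x := x) (m := m) k ω * Zr (x := x) (m := m) l ω
      + Zi (x := x) (m := m) k ω * Zi (x := x) (m := m) l ω : ℝ)) : ℂ)) μ :=
    (intP hx hv k l).ofReal
  have iQ : Integrable (fun ω : Ω => (((Zr (x := x) (m := m) k ω * Zi (x := x) (m := m) l ω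
      - Zi (x := x) (m := m) k ω * Zr (x := x) (m := m) l ω : ℝ)) : ℂ) * Complex.I) μ :=
    ((intQ hx hv k l).ofReal).mul_const _
  have iPQ : Integrable (fun ω : Ω => (((Zr (x := x) (m := m) k ω * Zr (x := x) (m := m) l ω
      + Zi (x := x) (m := m) k ω * Zi (x := x) (m := m) l ω : ℝ)) : ℂ)
      + (((Zr (x := x) (m := m) k ω * Zi (x := x) (m := m) l ω
      - Zi (x := x) (m := m) k ω * Zr (x := x) (m := m) l ω : ℝ)) : ℂ) * Complex.I) μ := iP.add iQ
  have iA12 : Integrable (fun ω : Ω => conj (m k) * m l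
      + conj (m k) * (((Zr (x := x) (m := m) l ω : ℝ) : ℂ)
      + ((Zi (x := x) (m := m) l ω : ℝ) : ℂ) * Complex.I)) μ := (integrable_const _).add iA2
  have iA123 : Integrable (fun ω : Ω => conj (m k) * m l
      + conj (m k) * (((Zr (x := x) (m := m) l ω : ℝ) : ℂ)
        + ((Zi (x := x) (m := m) l ω : ℝ) : ℂ) * Complex.I)
      + (((Zr (x := x) (m := m) k ω : ℝ) : ℂ)
        - ((Zi (x := x) (m := m) k ω : ℝ) : ℂ) * Complex.I) * m l) μ := iA12.add iA3
  have eZrk : ∫ ω, ((Zr (x := x) (m := m) k ω : ℝ) : ℂ) ∂μ = 0 := by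
    have h : ∫ ω, ((Zr (x := x) (m := m) k ω : ℝ) : ℂ) ∂μ
        = ((∫ ω, Zr (x := x) (m := m) k ω ∂μ : ℝ) : ℂ) := integral_ofReal
    rw [h, EZr hx hv k]; simp
  have eZik : ∫ ω, ((Zi (x := x) (m := m) k ω : ℝ) : ℂ) ∂μ = 0 := by
    have h : ∫ ω, ((Zi (x := x) (m := m) k ω : ℝ) : ℂ) ∂μ
        = ((∫ ω, Zi (x := x) (m := m) k ω ∂μ : ℝ) : ℂ) := integral_ofReal
    rw [h, EZi hx hv k]; simp
  have eZrl : ∫ ω, ((Zr (x := x) (m := m) l ω : ℝ) : ℂ) ∂μ = 0 := by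
    have h : ∫ ω, ((Zr (x := x) (m := m) l ω : ℝ) : ℂ) ∂μ
        = ((∫ ω, Zr (x := x) (m := m) l ω ∂μ : ℝ) : ℂ) := integral_ofReal
    rw [h, EZr hx hv l]; simp
  have eZil : ∫ ω, ((Zi (x := x) (m := m) l ω : ℝ) : ℂ) ∂μ = 0 := by
    have h : ∫ ω, ((Zi (x := x) (m := m) l ω : ℝ) : ℂ) ∂μ
        = ((∫ ω, Zi (x := x) (m := m) l ω ∂μ : ℝ) : ℂ) := integral_ofReal
    rw [h, EZi hx hv l]; simp
  have eP : ∫ ω, (((Zr (x := x) (m := m) k ω * Zr (x := x) (m := m) l ω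
      + Zi (x := x) (m := m) k ω * Zi (x := x) (m := m) l ω : ℝ)) : ℂ) ∂μ
      = ((if k = l then v else 0 : ℝ) : ℂ) := by
    have h : ∫ ω, (((Zr (x := x) (m := m) k ω * Zr (x := x) (m := m) l ω
        + Zi (x := x) (m := m) k ω * Zi (x := x) (m := m) l ω : ℝ)) : ℂ) ∂μ
        = ((∫ ω, (Zr (x := x) (m := m) k ω * Zr (x := x) (m := m) l ω
        + Zi (x := x) (m := m) k ω * Zi (x := x) (m := m) l ω) ∂μ : ℝ) : ℂ) := integral_ofReal
    rw [h, EP hx hv k l]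
  have eQ : ∫ ω, (((Zr (x := x) (m := m) k ω * Zi (x := x) (m := m) l ω
      - Zi (x := x) (m := m) k ω * Zr (x := x) (m := m) l ω : ℝ)) : ℂ) ∂μ = 0 := by
    have h : ∫ ω, (((Zr (x := x) (m := m) k ω * Zi (x := x) (m := m) l ω
        - Zi (x := x) (m := m) k ω * Zr (x := x) (m := m) l ω : ℝ)) : ℂ) ∂μ
        = ((∫ ω, (Zr (x := x) (m := m) k ω * Zi (x := x) (m := m) l ω
        - Zi (x := x) (m := m) k ω * Zr (x := x) (m := m) l ω) ∂μ : ℝ) : ℂ) := integral_ofReal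
    rw [h, EQ hx hv k l]; simp
  have eA2 : ∫ ω, conj (m k) * (((Zr (x := x) (m := m) l ω : ℝ) : ℂ)
      + ((Zi (x := x) (m := m) l ω : ℝ) : ℂ) * Complex.I) ∂μ = 0 := by
    rw [integral_const_mul, integral_add i1l i2l, integral_mul_const, eZrl, eZil]
    simp
  have eA3 : ∫ ω, (((Zr (x := x) (m := m) k ω : ℝ) : ℂ)
      - ((Zi (x := x) (m := m) k ω : ℝ) : ℂ) * Complex.I) * m l ∂μ = 0 := by
    rw [integral_mul_const, integral_sub i1k i2k, integral_mul_const, eZrk, eZik]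
    simp
  have eA4 : ∫ ω, ((((Zr (x := x) (m := m) k ω * Zr (x := x) (m := m) l ω
      + Zi (x := x) (m := m) k ω * Zi (x := x) (m := m) l ω : ℝ)) : ℂ)
      + (((Zr (x := x) (m := m) k ω * Zi (x := x) (m := m) l ω
      - Zi (x := x) (m := m) k ω * Zr (x := x) (m := m) l ω : ℝ)) : ℂ) * Complex.I) ∂μ
      = ((if k = l then v else 0 : ℝ) : ℂ) := by
    rw [integral_add iP iQ, integral_mul_const, eP, eQ]
    simp
  rw [mulExpand hx hv k l, integral_add iA123 iPQ, integral_add iA12 iA3,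
    integral_add (integrable_const _) iA2, eA2, eA3, eA4, integral_const]
  simp only [measure_univ, ENNReal.toReal_one, one_smul, add_zero, zero_add]
  by_cases hkl : k = l <;> simp [hkl]

end CGV
end Vec2

section Main
open ComplexConjugate

lemma integrableConjC {Ω : Type*} [MeasurableSpace Ω] {μ : Measure Ω} {f : Ω → ℂ}
    (hf : Integrable f μ) : Integrable (fun ω => conj (f ω)) μ := by
  have h : (fun ω => conj (f ω))
      = fun ω => (((f ω).re : ℝ) : ℂ) - (((f ω).im : ℝ) : ℂ) * Complex.I := by
    funext ω; apply Complex.ext <;> simp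
  rw [h]
  exact ((hf.re.ofReal).sub ((hf.im.ofReal).mul_const _))

lemma measurableConjC : Measurable (fun z : ℂ => conj z) :=
  Complex.continuous_conj.measurable

lemma sum_eval {M : ℕ} (mi mj : Fin M → ℂ) (vi w : ℝ) :
    (∑ k : Fin M, ∑ l : Fin M,
      (conj (mi k) * mi l + (if k = l then (vi : ℂ) else 0))
        * (mj k * conj (mj l) + (if k = l then (w : ℂ) else 0)))
    = dotH mi mj * conj (dotH mi mj)
      + ((w * norm2 mi + vi * norm2 mj + M * (vi * w) : ℝ) : ℂ) := by
  have term : ∀ k l : Fin M,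
      (conj (mi k) * mi l + (if k = l then (vi : ℂ) else 0))
        * (mj k * conj (mj l) + (if k = l then (w : ℂ) else 0))
      = (conj (mi k) * mj k) * (mi l * conj (mj l))
        + (if k = l then (conj (mi k) * mi k * (w : ℂ)
            + (vi : ℂ) * (mj k * conj (mj k)) + (vi : ℂ) * (w : ℂ)) else 0) := by
    intro k l
    by_cases hkl : k = l
    · subst hkl; simp; ring
    · simp [hkl]; ring
  simp only [term, Finset.sum_add_distrib]
  congr 1
  · rw [← Finset.sum_mul_sum]
    congr 1
    rw [dotH, map_sum]
    exact Finset.sum_congr rfl fun l _ => by rw [map_mul, Complex.conj_conj]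
  · have hin : ∀ k : Fin M, (∑ l : Fin M, if k = l then (conj (mi k) * mi k * (w : ℂ)
        + (vi : ℂ) * (mj k * conj (mj k)) + (vi : ℂ) * (w : ℂ)) else 0)
        = conj (mi k) * mi k * (w : ℂ)
          + (vi : ℂ) * (mj k * conj (mj k)) + (vi : ℂ) * (w : ℂ) := by
      intro k
      simp
    simp only [hin]
    have hc1 : ∀ z : ℂ, conj z * z = ((Complex.normSq z : ℝ) : ℂ) := fun z => by
      rw [mul_comm, Complex.mul_conj]
    have hc2 : ∀ z : ℂ, z * conj z = ((Complex.normSq z : ℝ) : ℂ) := fun z => Complex.mul_conj z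
    simp only [hc1, hc2]
    rw [Finset.sum_add_distrib, Finset.sum_add_distrib, Finset.sum_const,
      ← Finset.sum_mul, ← Finset.mul_sum]
    push_cast [norm2]
    simp only [Finset.card_univ, Fintype.card_fin, nsmul_eq_mul]
    push_cast
    ring
end Main


-- STATEMENT 4: exact form of (44) and of (25)–(26)
open ComplexConjugate in
/-- exact form of (44) and of the interference coefficients (25)–(26):
`E{|ĥ_i^H h_j|²} = |m_i^H m_j|² + M·ξ_{ij}`. -/
theorem expectation_abs_sq_cross_interference
    {Ω : Type*} [MeasurableSpace Ω] (μ : Measure Ω) [IsProbabilityMeasure μ]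
    (M : ℕ) (βi βj Ki Kj τ pp : ℝ)
    (hβi : 0 < βi) (hβj : 0 < βj) (hKi : 0 ≤ Ki) (hKj : 0 ≤ Kj)
    (hτ : 0 < τ) (hpp : 0 < pp)
    (ηi ηj vi vj σj2 ξij : ℝ)
    (hηi : ηi = τ * pp * βi / (1 + τ * pp * βi))
    (hηj : ηj = τ * pp * βj / (1 + τ * pp * βj))
    (hvi : vi = βi * ηi / (Ki + 1))
    (hvj : vj = βj * ηj / (Kj + 1))
    (hσj2 : σj2 = βj / ((1 + τ * pp * βj) * (Kj + 1)))
    (hξ : ξij = (βi * βj / ((Ki + 1) * (Kj + 1)))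
        * ((Ki + ηi) / (1 + τ * pp * βj) + Kj * ηi + Ki * ηj + ηi * ηj))
    (hi hj ej h : Ω → Fin M → ℂ) (mi mj : Fin M → ℂ)
    (hmi : norm2 mi = M * βi * Ki / (Ki + 1))
    (hmj : norm2 mj = M * βj * Kj / (Kj + 1))
    (hgi : IsComplexGaussianVec μ M hi mi vi)
    (hgj : IsComplexGaussianVec μ M hj mj vj)
    (hgej : IsComplexGaussianVec μ M ej 0 σj2)
    (hind : iIndepFun ![hi, hj, ej] μ)
    (hdef : ∀ ω, h ω = hj ω + ej ω) :
    ∫ ω, ‖dotH (hi ω) (h ω)‖ ^ 2 ∂μ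
      = ‖dotH mi mj‖ ^ 2 + M * ξij := by
  have hH : h = fun ω => hj ω + ej ω := funext hdef
  subst hH
  show ∫ ω, ‖dotH (hi ω) (hj ω + ej ω)‖ ^ 2 ∂μ
      = ‖dotH mi mj‖ ^ 2 + M * ξij
  -- positivity facts
  have hdi : (0:ℝ) < 1 + τ * pp * βi := by positivity
  have hdj : (0:ℝ) < 1 + τ * pp * βj := by positivity
  have hKi1 : (0:ℝ) < Ki + 1 := by linarith
  have hKj1 : (0:ℝ) < Kj + 1 := by linarith
  have hηip : 0 < ηi := by rw [hηi]; positivity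
  have hηjp : 0 < ηj := by rw [hηj]; positivity
  have hvip : 0 < vi := by rw [hvi]; positivity
  have hvjp : 0 < vj := by rw [hvj]; positivity
  have hσp : 0 < σj2 := by rw [hσj2]; positivity
  -- independence structure
  have mAll : ∀ i, Measurable (![hi, hj, ej] i) := by
    intro i
    fin_cases i
    · exact measurable_pi_lambda _ hgi.1
    · exact measurable_pi_lambda _ hgj.1
    · exact measurable_pi_lambda _ hgej.1
  have hp : IndepFun (fun ω => (hj ω, ej ω)) hi μ :=
    hind.indepFun_prodMk mAll 1 2 0 (by decide) (by decide)
  have hjejIndep : IndepFun hj ej μ := hind.indepFun (show (1 : Fin 3) ≠ 2 by decide)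
  -- first-vector second moments
  have intF : ∀ k l, Integrable (fun ω => conj (hi ω k) * hi ω l) μ :=
    fun k l => CGV.intMul hgi hvip k l
  have EF : ∀ k l, ∫ ω, conj (hi ω k) * hi ω l ∂μ
      = conj (mi k) * mi l + (if k = l then (vi:ℂ) else 0) :=
    fun k l => CGV.EMul hgi hvip k l
  -- hj second moments, conjugate orientation
  have hjflip : ∀ k l : Fin M, (fun ω => hj ω k * conj (hj ω l))
      = fun ω => conj (conj (hj ω k) * hj ω l) := by
    intro k l; funext ω; rw [map_mul, Complex.conj_conj]
  have intHJ : ∀ k l, Integrable (fun ω => hj ω k * conj (hj ω l)) μ := by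
    intro k l; rw [hjflip k l]; exact integrableConjC (CGV.intMul hgj hvjp k l)
  have EHJ : ∀ k l, ∫ ω, hj ω k * conj (hj ω l) ∂μ
      = mj k * conj (mj l) + (if k = l then (vj:ℂ) else 0) := by
    intro k l
    rw [hjflip k l, integral_conj, CGV.EMul hgj hvjp k l, map_add, map_mul, Complex.conj_conj]
    congr 1
    by_cases hkl : k = l <;> simp [hkl]
  -- ej second moments
  have ejflip : ∀ k l : Fin M, (fun ω => ej ω k * conj (ej ω l))
      = fun ω => conj (conj (ej ω k) * ej ω l) := by
    intro k l; funext ω; rw [map_mul, Complex.conj_conj]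
  have intEJ : ∀ k l, Integrable (fun ω => ej ω k * conj (ej ω l)) μ := by
    intro k l; rw [ejflip k l]; exact integrableConjC (CGV.intMul hgej hσp k l)
  have EEJ : ∀ k l, ∫ ω, ej ω k * conj (ej ω l) ∂μ = (if k = l then (σj2:ℂ) else 0) := by
    intro k l
    rw [ejflip k l, integral_conj, CGV.EMul hgej hσp k l]
    by_cases hkl : k = l <;> simp [hkl]
  -- first moments
  have intHjc : ∀ k, Integrable (fun ω => hj ω k) μ := fun k => CGV.intCoord hgj hvjp k
  have intEjc : ∀ k, Integrable (fun ω => ej ω k) μ := fun k => CGV.intCoord hgej hσp k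
  have Eejc : ∀ k, ∫ ω, ej ω k ∂μ = 0 := fun k => by
    have := CGV.ECoord hgej hσp k; simpa using this
  -- cross moments
  have cross1Ind : ∀ k l : Fin M, IndepFun (fun ω => hj ω k) (fun ω => conj (ej ω l)) μ :=
    fun k l => hjejIndep.comp (measurable_pi_apply k)
      (measurableConjC.comp (measurable_pi_apply l))
  have cross2Ind : ∀ k l : Fin M, IndepFun (fun ω => ej ω k) (fun ω => conj (hj ω l)) μ :=
    fun k l => hjejIndep.symm.comp (measurable_pi_apply k)
      (measurableConjC.comp (measurable_pi_apply l))
  have intC1 : ∀ k l, Integrable (fun ω => hj ω k * conj (ej ω l)) μ := by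
    intro k l
    exact (cross1Ind k l).integrable_mul (intHjc k) (integrableConjC (intEjc l))
  have intC2 : ∀ k l, Integrable (fun ω => ej ω k * conj (hj ω l)) μ := by
    intro k l
    exact (cross2Ind k l).integrable_mul (intEjc k) (integrableConjC (intHjc l))
  have EC1 : ∀ k l, ∫ ω, hj ω k * conj (ej ω l) ∂μ = 0 := by
    intro k l
    rw [indep_integral_mul_complex (cross1Ind k l) (intHjc k) (integrableConjC (intEjc l)),
      integral_conj, Eejc l]
    simp
  have EC2 : ∀ k l, ∫ ω, ej ω k * conj (hj ω l) ∂μ = 0 := by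
    intro k l
    rw [indep_integral_mul_complex (cross2Ind k l) (intEjc k) (integrableConjC (intHjc l)),
      Eejc k]
    simp
  -- second vector combined moments
  have Gexp : ∀ k l : Fin M, (fun ω => (hj ω + ej ω) k * conj ((hj ω + ej ω) l))
      = fun ω => hj ω k * conj (hj ω l) + hj ω k * conj (ej ω l)
          + ej ω k * conj (hj ω l) + ej ω k * conj (ej ω l) := by
    intro k l; funext ω
    simp only [Pi.add_apply, map_add]
    ring
  have intG : ∀ k l, Integrable (fun ω => (hj ω + ej ω) k * conj ((hj ω + ej ω) l)) μ := by
    intro k l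
    rw [Gexp k l]
    exact (((intHJ k l).add (intC1 k l)).add (intC2 k l)).add (intEJ k l)
  have EG : ∀ k l, ∫ ω, (hj ω + ej ω) k * conj ((hj ω + ej ω) l) ∂μ
      = mj k * conj (mj l) + (if k = l then ((vj + σj2 : ℝ) : ℂ) else 0) := by
    intro k l
    have i12 : Integrable (fun ω => hj ω k * conj (hj ω l) + hj ω k * conj (ej ω l)) μ :=
      (intHJ k l).add (intC1 k l)
    have i123 : Integrable (fun ω => hj ω k * conj (hj ω l) + hj ω k * conj (ej ω l)
        + ej ω k * conj (hj ω l)) μ := i12.add (intC2 k l)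
    rw [Gexp k l, integral_add i123 (intEJ k l), integral_add i12 (intC2 k l),
      integral_add (intHJ k l) (intC1 k l), EHJ k l, EC1 k l, EC2 k l, EEJ k l]
    by_cases hkl : k = l <;> simp [hkl] <;> push_cast <;> ring
  -- independence of the two factors
  have mF : ∀ k l : Fin M, Measurable (fun a : Fin M → ℂ => conj (a k) * a l) :=
    fun k l => (measurableConjC.comp (measurable_pi_apply k)).mul (measurable_pi_apply l)
  have mG : ∀ k l : Fin M, Measurable (fun p : (Fin M → ℂ) × (Fin M → ℂ) =>
      (p.1 + p.2) k * conj ((p.1 + p.2) l)) := by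
    intro k l
    have m1 : Measurable (fun p : (Fin M → ℂ) × (Fin M → ℂ) => (p.1 + p.2) k) :=
      ((measurable_pi_apply k).comp measurable_fst).add
        ((measurable_pi_apply k).comp measurable_snd)
    have m2 : Measurable (fun p : (Fin M → ℂ) × (Fin M → ℂ) => (p.1 + p.2) l) :=
      ((measurable_pi_apply l).comp measurable_fst).add
        ((measurable_pi_apply l).comp measurable_snd)
    exact m1.mul (measurableConjC.comp m2)
  have hFG : ∀ k l : Fin M, IndepFun (fun ω => conj (hi ω k) * hi ω l)
      (fun ω => (hj ω + ej ω) k * conj ((hj ω + ej ω) l)) μ := by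
    intro k l
    exact hp.symm.comp (mF k l) (mG k l)
  -- term-by-term
  have intT : ∀ k l, Integrable (fun ω => (conj (hi ω k) * hi ω l)
      * ((hj ω + ej ω) k * conj ((hj ω + ej ω) l))) μ := by
    intro k l
    exact (hFG k l).integrable_mul (intF k l) (intG k l)
  have ET : ∀ k l, ∫ ω, (conj (hi ω k) * hi ω l)
      * ((hj ω + ej ω) k * conj ((hj ω + ej ω) l)) ∂μ
      = (conj (mi k) * mi l + (if k = l then (vi:ℂ) else 0))
        * (mj k * conj (mj l) + (if k = l then ((vj + σj2 : ℝ):ℂ) else 0)) := by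
    intro k l
    rw [indep_integral_mul_complex (hFG k l) (intF k l) (intG k l), EF k l, EG k l]
  -- expansion of |dotH|^2
  have hXX : ∀ ω, dotH (hi ω) (hj ω + ej ω) * conj (dotH (hi ω) (hj ω + ej ω))
      = ∑ k, ∑ l, (conj (hi ω k) * hi ω l)
          * ((hj ω + ej ω) k * conj ((hj ω + ej ω) l)) := by
    intro ω
    rw [dotH, map_sum, Finset.sum_mul_sum]
    refine Finset.sum_congr rfl fun k _ => Finset.sum_congr rfl fun l _ => ?_
    rw [map_mul, Complex.conj_conj]
    ring
  have intXX : Integrable (fun ω => dotH (hi ω) (hj ω + ej ω)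
      * conj (dotH (hi ω) (hj ω + ej ω))) μ := by
    simp only [hXX]
    exact integrable_finset_sum _ fun k _ => integrable_finset_sum _ fun l _ => intT k l
  have EXX : ∫ ω, dotH (hi ω) (hj ω + ej ω) * conj (dotH (hi ω) (hj ω + ej ω)) ∂μ
      = dotH mi mj * conj (dotH mi mj)
        + (((vj + σj2) * norm2 mi + vi * norm2 mj + M * (vi * (vj + σj2)) : ℝ) : ℂ) := by
    simp only [hXX]
    rw [integral_finset_sum _ fun k _ => integrable_finset_sum _ fun l _ => intT k l]
    calc (∑ k, ∫ ω, ∑ l, (conj (hi ω k) * hi ω l)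
          * ((hj ω + ej ω) k * conj ((hj ω + ej ω) l)) ∂μ)
        = ∑ k, ∑ l, ∫ ω, (conj (hi ω k) * hi ω l)
            * ((hj ω + ej ω) k * conj ((hj ω + ej ω) l)) ∂μ :=
          Finset.sum_congr rfl fun k _ => integral_finset_sum _ fun l _ => intT k l
      _ = ∑ k, ∑ l, (conj (mi k) * mi l + (if k = l then (vi:ℂ) else 0))
            * (mj k * conj (mj l) + (if k = l then ((vj + σj2 : ℝ):ℂ) else 0)) :=
          Finset.sum_congr rfl fun k _ => Finset.sum_congr rfl fun l _ => ET k l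
      _ = dotH mi mj * conj (dotH mi mj)
            + (((vj + σj2) * norm2 mi + vi * norm2 mj
                + M * (vi * (vj + σj2)) : ℝ) : ℂ) := sum_eval mi mj vi (vj + σj2)
  -- take real parts
  have habs : (fun ω => ‖dotH (hi ω) (hj ω + ej ω)‖ ^ 2)
      = fun ω => (dotH (hi ω) (hj ω + ej ω) * conj (dotH (hi ω) (hj ω + ej ω))).re := by
    funext ω
    rw [Complex.mul_conj]
    simp [Complex.sq_norm]
  rw [habs]
  have hre : ∫ ω, (dotH (hi ω) (hj ω + ej ω) * conj (dotH (hi ω) (hj ω + ej ω))).re ∂μ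
      = (∫ ω, dotH (hi ω) (hj ω + ej ω) * conj (dotH (hi ω) (hj ω + ej ω)) ∂μ).re := by
    simpa using (integral_re intXX)
  rw [hre, EXX]
  have hfinal : (dotH mi mj * conj (dotH mi mj)
      + (((vj + σj2) * norm2 mi + vi * norm2 mj + M * (vi * (vj + σj2)) : ℝ) : ℂ)).re
      = ‖dotH mi mj‖ ^ 2
        + ((vj + σj2) * norm2 mi + vi * norm2 mj + M * (vi * (vj + σj2))) := by
    rw [Complex.add_re, Complex.mul_conj]
    simp [Complex.sq_norm]
  rw [hfinal]
  congr 1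
  -- final real algebra
  rw [hmi, hmj, hξ, hvi, hvj, hσj2, hηi, hηj]
  field_simp
  ring
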